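/- The restriction g of the torsion function v of a metric graph G to the vertex set satisfies the discrete system: g(v) = 0 for Dirichlet vertices v, and (1/d_v^ℓ) Σ_{e={v,w}} (g(v) - g(w))/ℓ_e = 1/2 for all natural vertices v, where d_v^ℓ = Σ_{e ∋ v} ℓ_e is the metric degree. -/

import Mathlib

open MeasureTheory Finset

lemma quad_key (f f' : ℝ → ℝ) (L : ℝ) (hL : 0 < L)
    (h1 : ∀ x ∈ Set.Icc (0:ℝ) L, HasDerivAt f (f' x) x)
    (h2 : ∀ x ∈ Set.Icc (0:ℝ) L, HasDerivAt f' (-1) x) :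
    f' 0 = (f L - f 0) / L + L / 2 ∧ f' L = f' 0 - L := by
  have hd : ∀ x ∈ Set.Icc (0:ℝ) L, f' x = f' 0 - x := by
    have := eq_of_has_deriv_right_eq (a := (0:ℝ)) (b := L)
      (f := f') (g := fun x => f' 0 - x) (f' := fun _ => (-1 : ℝ))
      (fun x hx => ((h2 x (Set.Ico_subset_Icc_self hx)).hasDerivWithinAt))
      (fun x hx => by
        simpa using (((hasDerivAt_id x).const_sub (f' 0)).hasDerivWithinAt :
          HasDerivWithinAt (fun y => f' 0 - y) (-1) (Set.Ici x) x))
      (fun x hx => (h2 x hx).continuousAt.continuousWithinAt)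
      (by fun_prop) (by simp)
    simpa using this
  have hf : ∀ x ∈ Set.Icc (0:ℝ) L, f x = f 0 + f' 0 * x - x ^ 2 / 2 := by
    have := eq_of_has_deriv_right_eq (a := (0:ℝ)) (b := L)
      (f := f) (g := fun x => f 0 + f' 0 * x - x ^ 2 / 2) (f' := f')
      (fun x hx => ((h1 x (Set.Ico_subset_Icc_self hx)).hasDerivWithinAt))
      (fun x hx => by
        rw [hd x (Set.Ico_subset_Icc_self hx)]
        have : HasDerivAt (fun x : ℝ => f 0 + f' 0 * x - x ^ 2 / 2)
            (f' 0 - x) x := by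
          have h1' : HasDerivAt (fun x : ℝ => f 0 + f' 0 * x) (f' 0) x := by
            simpa using ((hasDerivAt_id x).const_mul (f' 0)).const_add (f 0)
          have h2' : HasDerivAt (fun x : ℝ => x ^ 2 / 2) x x := by
            simpa using (hasDerivAt_pow 2 x).div_const 2
          exact h1'.sub h2'
        exact this.hasDerivWithinAt)
      (fun x hx => (h1 x hx).continuousAt.continuousWithinAt)
      (by fun_prop) (by simp)
    simpa using this
  constructor
  · have := hf L ⟨le_of_lt hL, le_refl L⟩
    field_simp at this ⊢
    ring_nf at this ⊢
    nlinarith [this]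
  · simpa using hd L ⟨le_of_lt hL, le_refl L⟩

/-- The restriction `g` of the torsion function of a metric graph to the vertex set satisfies
the discrete system: `g(v) = 0` at Dirichlet vertices, and
`(1/d_v^ℓ) Σ_{e={v,w}} (g(v)-g(w))/ℓ_e = 1/2` at natural vertices, where
`d_v^ℓ = Σ_{e ∋ v} ℓ_e`.  Edges are modelled by maps `s t : E → V` (an edge `e` is
identified with `[0, ℓ e]`, with `0` corresponding to `s e` and `ℓ e` to `t e`). -/
theorem stmt10 (V E : Type) [Fintype V] [Fintype E] [DecidableEq V]
    (s t : E → V) (ℓ : E → ℝ) (hℓ : ∀ e, 0 < ℓ e)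
    (VD : Finset V) (hVD : VD.Nonempty)
    (hinc : ∀ w : V, ∃ e, s e = w ∨ t e = w)
    (ve ve' : E → ℝ → ℝ) (g : V → ℝ)
    (hder : ∀ e, ∀ x ∈ Set.Icc (0:ℝ) (ℓ e), HasDerivAt (ve e) (ve' e x) x)
    (hder2 : ∀ e, ∀ x ∈ Set.Icc (0:ℝ) (ℓ e), HasDerivAt (ve' e) (-1) x)
    (hs : ∀ e, ve e 0 = g (s e)) (ht : ∀ e, ve e (ℓ e) = g (t e))
    (hDir : ∀ w ∈ VD, g w = 0)
    (hKir : ∀ w, w ∉ VD →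
      (∑ e ∈ univ.filter (fun e => s e = w), ve' e 0)
        - (∑ e ∈ univ.filter (fun e => t e = w), ve' e (ℓ e)) = 0) :
    (∀ w ∈ VD, g w = 0) ∧
      ∀ w, w ∉ VD →
        (1 / ((∑ e ∈ univ.filter (fun e => s e = w), ℓ e) +
              (∑ e ∈ univ.filter (fun e => t e = w), ℓ e))) *
          ((∑ e ∈ univ.filter (fun e => s e = w), (g w - g (t e)) / ℓ e) +
           (∑ e ∈ univ.filter (fun e => t e = w), (g w - g (s e)) / ℓ e)) = 1 / 2 := by
  have hval : ∀ e, ve' e 0 = (g (t e) - g (s e)) / ℓ e + ℓ e / 2 ∧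
      ve' e (ℓ e) = ve' e 0 - ℓ e := by
    intro e
    have := quad_key (ve e) (ve' e) (ℓ e) (hℓ e) (hder e) (hder2 e)
    rw [hs e, ht e] at this
    exact this
  refine ⟨hDir, fun w hw => ?_⟩
  -- positivity of the metric degree
  have hs_nonneg : (0:ℝ) ≤ ∑ e ∈ univ.filter (fun e => s e = w), ℓ e :=
    Finset.sum_nonneg fun e _ => (hℓ e).le
  have ht_nonneg : (0:ℝ) ≤ ∑ e ∈ univ.filter (fun e => t e = w), ℓ e :=
    Finset.sum_nonneg fun e _ => (hℓ e).le
  have hD : 0 < (∑ e ∈ univ.filter (fun e => s e = w), ℓ e) +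
      (∑ e ∈ univ.filter (fun e => t e = w), ℓ e) := by
    obtain ⟨e, he⟩ := hinc w
    rcases he with he | he
    · have hmem : e ∈ univ.filter (fun e => s e = w) := by simp [he]
      have := Finset.single_le_sum (f := ℓ) (fun e _ => (hℓ e).le) hmem
      linarith [hℓ e]
    · have hmem : e ∈ univ.filter (fun e => t e = w) := by simp [he]
      have := Finset.single_le_sum (f := ℓ) (fun e _ => (hℓ e).le) hmem
      linarith [hℓ e]
  -- rewrite the two Kirchhoff sums
  have e1 : ∑ e ∈ univ.filter (fun e => s e = w), ve' e 0
      = -(∑ e ∈ univ.filter (fun e => s e = w), (g w - g (t e)) / ℓ e)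
        + (∑ e ∈ univ.filter (fun e => s e = w), ℓ e) / 2 := by
    rw [← Finset.sum_neg_distrib, Finset.sum_div, ← Finset.sum_add_distrib]
    refine Finset.sum_congr rfl fun e he => ?_
    have hse : s e = w := by simpa using he
    rw [(hval e).1, hse]
    have : (ℓ e) ≠ 0 := (hℓ e).ne'
    field_simp
    ring
  have e2 : ∑ e ∈ univ.filter (fun e => t e = w), ve' e (ℓ e)
      = (∑ e ∈ univ.filter (fun e => t e = w), (g w - g (s e)) / ℓ e)
        - (∑ e ∈ univ.filter (fun e => t e = w), ℓ e) / 2 := by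
    rw [Finset.sum_div, ← Finset.sum_sub_distrib]
    refine Finset.sum_congr rfl fun e he => ?_
    have hte : t e = w := by simpa using he
    rw [(hval e).2, (hval e).1, hte]
    have : (ℓ e) ≠ 0 := (hℓ e).ne'
    field_simp
    ring
  have hk := hKir w hw
  rw [e1, e2] at hk
  have hDne : ((∑ e ∈ univ.filter (fun e => s e = w), ℓ e) +
      (∑ e ∈ univ.filter (fun e => t e = w), ℓ e)) ≠ 0 := hD.ne'
  field_simp
  linarith [hk]
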